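/- For any 0 < η < 1 and γ, ε' > 0 with (ε')²·η > 2γ, consider a coloured rank-n matroid with colour classes B₁,…,B_n (each a basis) and a subset R ⊆ B₁ ∪ … ∪ B_n satisfying: for every independent set T ⊆ B₁ ∪ … ∪ B_n and every colour subset C ⊆ [n], there are at least η·(n−|T|)·|C| − γn² elements e ∈ ⋃_{c∈C}(B_c ∩ R) such that T ∪ {e} is independent. Then for any subset Q ⊆ R with |Q| ≥ |R| − γn² and any colour set C ⊆ [n] with |C| ≥ ε'·n, we have rk(⋃_{c∈C}(B_c ∩ Q)) ≥ (1−ε')·n. -/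

import Mathlib

noncomputable def mrk {α : Type*} (M : Matroid α) (X : Set α) : ℕ :=
  sSup {n | ∃ I, I ⊆ X ∧ M.Indep I ∧ I.ncard = n}

/-- In a coloured rank-`n` matroid whose colour classes `B₁, …, B_n` are
bases, suppose `R` satisfies: for every independent `T` and colour set `C`, at least
`η(n−|T|)|C| − γn²` elements `e ∈ ⋃_{c∈C}(B_c ∩ R)` can be added to `T` keeping
independence. If `(ε')²η > 2γ`, then for every `Q ⊆ R` with `|Q| ≥ |R| − γn²` and every
colour set `C` with `|C| ≥ ε'n`, we have `rk(⋃_{c∈C}(B_c ∩ Q)) ≥ (1−ε')n`. -/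
theorem stmt13 {α : Type*} (M : Matroid α) [M.Finite] (n : ℕ)
    (B : Fin n → Set α) (hB : ∀ c, M.IsBase (B c))
    (hground : M.E = ⋃ c, B c)
    (hBdisj : ∀ c c', c ≠ c' → Disjoint (B c) (B c'))
    (η γ ε' : ℝ) (hη0 : 0 < η) (hη1 : η < 1) (hγ : 0 < γ) (hε' : 0 < ε')
    (hineq : 2 * γ < ε' ^ 2 * η)
    (R : Set α) (hR : R ⊆ M.E)
    (hspade : ∀ T : Set α, M.Indep T → ∀ C : Set (Fin n),
      η * ((n : ℝ) - T.ncard) * C.ncard - γ * (n : ℝ) ^ 2 ≤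
        ({e ∈ ⋃ c ∈ C, B c ∩ R | e ∉ T ∧ M.Indep (insert e T)}.ncard : ℝ)) :
    ∀ Q ⊆ R, (R.ncard : ℝ) - γ * (n : ℝ) ^ 2 ≤ Q.ncard →
      ∀ C : Set (Fin n), ε' * n ≤ C.ncard →
        (1 - ε') * n ≤ (mrk M (⋃ c ∈ C, B c ∩ Q) : ℝ) := by
  intro Q hQR hQcard C hC
  have hEfin : M.E.Finite := M.ground_finite
  have hRfin : R.Finite := hEfin.subset hR
  have hQfin : Q.Finite := hRfin.subset hQR
  set X := ⋃ c ∈ C, B c ∩ Q with hXdef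
  have hXE : X ⊆ M.E := by
    rw [hground]
    refine Set.iUnion₂_subset fun c _ => ?_
    exact (Set.inter_subset_left).trans (Set.subset_iUnion B c)
  obtain ⟨T, hT⟩ := M.exists_isBasis X hXE
  have hbdd : BddAbove {m | ∃ I, I ⊆ X ∧ M.Indep I ∧ I.ncard = m} := by
    refine ⟨M.E.ncard, fun m hm => ?_⟩
    obtain ⟨I, hIX, hInd, rfl⟩ := hm
    exact Set.ncard_le_ncard (hIX.trans hXE) hEfin
  have hTle : T.ncard ≤ mrk M X :=
    le_csSup hbdd ⟨T, hT.subset, hT.indep, rfl⟩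
  rcases Nat.eq_zero_or_pos n with hn | hn
  · have : ((1:ℝ) - ε') * n = 0 := by simp [hn]
    rw [this]; positivity
  by_contra hlt
  push_neg at hlt
  have hTlt : (T.ncard : ℝ) < (1 - ε') * n := by
    refine lt_of_le_of_lt ?_ hlt
    exact_mod_cast hTle
  have hsp := hspade T hT.indep C
  set S := {e ∈ ⋃ c ∈ C, B c ∩ R | e ∉ T ∧ M.Indep (insert e T)} with hSdef
  have hSsub : S ⊆ R \ Q := by
    rintro e ⟨heU, heT, heI⟩
    obtain ⟨c, hec, hc, heR⟩ : ∃ c, e ∈ B c ∧ c ∈ C ∧ e ∈ R := by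
      simpa using heU
    refine ⟨heR, fun heQ => ?_⟩
    have heX : e ∈ X := Set.mem_biUnion hc ⟨hec, heQ⟩
    exact heT (hT.mem_of_insert_indep heX heI)
  have hdiff : ((R \ Q).ncard : ℝ) ≤ γ * (n : ℝ) ^ 2 := by
    rw [Set.ncard_diff hQR hQfin, Nat.cast_sub (Set.ncard_le_ncard hQR hRfin)]
    linarith
  have hScard : ((S.ncard : ℝ)) ≤ γ * (n : ℝ) ^ 2 := by
    refine le_trans ?_ hdiff
    exact_mod_cast Set.ncard_le_ncard hSsub (hRfin.diff (t := Q))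
  have hεn : (0:ℝ) < ε' * n := by positivity
  have h1 : ε' * n < (n : ℝ) - T.ncard := by nlinarith
  nlinarith [mul_le_mul_of_nonneg_left hC (le_of_lt hη0),
    mul_lt_mul_of_pos_right h1 hεn, mul_pos hεn hεn]
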